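/- In a double-ordered graph G with orders <₁, <₂ that is magical, the relation ≺ defined by a ≺ b iff a <₁ b, a <₂ b, and ab ∈ E(G) is transitive (hence a strict partial order). -/
import Mathlib

/-- In a magical double-ordered graph, the relation
`a ≺ b ↔ a <₁ b ∧ a <₂ b ∧ ab ∈ E(G)` is transitive. -/
theorem magical_prec_transitive {V : Type*} (G : SimpleGraph V)
    (lt1 lt2 : V → V → Prop)
    [IsStrictTotalOrder V lt1] [IsStrictTotalOrder V lt2]
    (hmag : ∀ a b c : V, lt1 a b → lt1 b c → G.Adj a b → G.Adj b c → ¬ G.Adj a c →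
      lt2 b a ∧ lt2 b c) :
    ∀ a b c : V, (lt1 a b ∧ lt2 a b ∧ G.Adj a b) → (lt1 b c ∧ lt2 b c ∧ G.Adj b c) →
      lt1 a c ∧ lt2 a c ∧ G.Adj a c := by
  rintro a b c ⟨h1ab, h2ab, hab⟩ ⟨h1bc, h2bc, hbc⟩
  refine ⟨trans_of lt1 h1ab h1bc, trans_of lt2 h2ab h2bc, ?_⟩
  by_contra hac
  exact (irrefl_of lt2 b) (trans_of lt2 (hmag a b c h1ab h1bc hab hbc hac).1 h2ab)
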